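/- For fixed γ ∈ [0, σ_max(F)), the partial derivative of 𝔄(q,γ) := (1/2)·ln det(I_ℓ − qΛ) − (ℓ/2)·ln(1 − qγ²) with respect to q at any q ∈ [0, σ_max(F)^{−2}) equals ℓ·(γ² − 𝒩(q)²) / (2·(1 − qγ²)·(1 − q·𝒩(q)²)). -/

import Mathlib

open MeasureTheory Real Matrix

/-- The largest singular value of `F`: the supremum of `‖F w‖` over unit vectors. -/
noncomputable def sigmaMax {s ℓ : ℕ} (F : Matrix (Fin s) (Fin ℓ) ℝ) : ℝ :=
  sSup {x : ℝ | ∃ w : Fin ℓ → ℝ, (∑ i, (w i)^2) = 1 ∧ x = Real.sqrt (∑ j, (F.mulVec w j)^2)}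

/-- `S(q) = (I − qΛ)⁻¹` with `Λ = FᵀF`. -/
noncomputable def Sq {s ℓ : ℕ} (F : Matrix (Fin s) (Fin ℓ) ℝ) (q : ℝ) :
    Matrix (Fin ℓ) (Fin ℓ) ℝ :=
  (1 - q • (Fᵀ * F))⁻¹

/-- `𝒜(q) = −(1/2)·ln det(ℓ·S(q)/Tr S(q))`. -/
noncomputable def Afun {s ℓ : ℕ} (F : Matrix (Fin s) (Fin ℓ) ℝ) (q : ℝ) : ℝ :=
  -(1 / 2) * Real.log ((((ℓ : ℝ) / (Sq F q).trace) • Sq F q).det)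

/-- `𝒩(q) = sqrt(Tr(Λ·S(q))/Tr S(q))`. -/
noncomputable def Nfun {s ℓ : ℕ} (F : Matrix (Fin s) (Fin ℓ) ℝ) (q : ℝ) : ℝ :=
  Real.sqrt ((Fᵀ * F * Sq F q).trace / (Sq F q).trace)

/-- `𝔄(q,γ) = (1/2)·ln det(I − qΛ) − (ℓ/2)·ln(1 − qγ²)`. -/
noncomputable def AAfun {s ℓ : ℕ} (F : Matrix (Fin s) (Fin ℓ) ℝ) (q γ : ℝ) : ℝ :=
  (1 / 2) * Real.log (1 - q • (Fᵀ * F)).det - ((ℓ : ℝ) / 2) * Real.log (1 - q * γ^2)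

private lemma bddAbove_sigmaSet {s ℓ : ℕ} (F : Matrix (Fin s) (Fin ℓ) ℝ) :
    BddAbove {x : ℝ | ∃ w : Fin ℓ → ℝ, (∑ i, (w i)^2) = 1 ∧
      x = Real.sqrt (∑ j, (F.mulVec w j)^2)} := by
  refine ⟨Real.sqrt (∑ j, ∑ i, (F j i)^2), ?_⟩
  rintro x ⟨w, hw, rfl⟩
  apply Real.sqrt_le_sqrt
  refine Finset.sum_le_sum fun j _ => ?_
  calc (F.mulVec w j)^2 = (∑ i, F j i * w i)^2 := rfl
    _ ≤ (∑ i, (F j i)^2) * (∑ i, (w i)^2) := Finset.sum_mul_sq_le_sq_mul_sq _ _ _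
    _ = ∑ i, (F j i)^2 := by rw [hw, mul_one]

/-- For fixed `γ ∈ [0, σ_max(F))`, the partial derivative of `𝔄(q,γ)` in `q` at
any `q ∈ [0, σ_max(F)^{−2})` equals
`ℓ(γ² − 𝒩(q)²)/(2(1 − qγ²)(1 − q𝒩(q)²))`. -/
theorem AAfun_deriv
    (s ℓ : ℕ) (F : Matrix (Fin s) (Fin ℓ) ℝ)
    (γ : ℝ) (hγ : γ ∈ Set.Ico 0 (sigmaMax F)) :
    ∀ q ∈ Set.Ico (0 : ℝ) ((sigmaMax F ^ 2)⁻¹),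
      HasDerivAt (fun t : ℝ => AAfun F t γ)
        ((ℓ : ℝ) * (γ^2 - Nfun F q ^ 2) /
          (2 * (1 - q * γ^2) * (1 - q * Nfun F q ^ 2))) q := by
  obtain ⟨hγ0, hγσ⟩ := hγ
  intro q hq
  obtain ⟨hq0, hqσ⟩ := hq
  have hσ : 0 < sigmaMax F := lt_of_le_of_lt hγ0 hγσ
  -- `ℓ` is positive
  have hℓ : 0 < ℓ := by
    rcases Nat.eq_zero_or_pos ℓ with h | h
    · exfalso
      subst h
      have hempty : {x : ℝ | ∃ w : Fin 0 → ℝ, (∑ i, (w i)^2) = 1 ∧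
          x = Real.sqrt (∑ j, (F.mulVec w j)^2)} = ∅ := by
        ext x; simp
      rw [sigmaMax, hempty, Real.sSup_empty] at hσ
      exact lt_irrefl 0 hσ
    · exact h
  have hℓR : (0 : ℝ) < (ℓ : ℝ) := by exact_mod_cast hℓ
  -- spectral data of Λ = Fᵀ F
  have hPSD : (Fᵀ * F).PosSemidef := by
    have h := Matrix.posSemidef_conjTranspose_mul_self F
    rwa [Matrix.conjTranspose_eq_transpose_of_trivial] at h
  have hΛ : (Fᵀ * F).IsHermitian := hPSD.1
  set μ : Fin ℓ → ℝ := hΛ.eigenvalues with hμdef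
  have hμ0 : ∀ i, 0 ≤ μ i := fun i => hPSD.eigenvalues_nonneg i
  set U : Matrix (Fin ℓ) (Fin ℓ) ℝ := (hΛ.eigenvectorUnitary : Matrix (Fin ℓ) (Fin ℓ) ℝ)
    with hUdef
  have hU1 : U * star U = 1 := (Matrix.mem_unitaryGroup_iff).mp hΛ.eigenvectorUnitary.2
  have hU2 : star U * U = 1 := (Matrix.mem_unitaryGroup_iff').mp hΛ.eigenvectorUnitary.2
  have hspec : Fᵀ * F = U * Matrix.diagonal μ * star U := by
    have h := hΛ.spectral_theorem
    rwa [RCLike.ofReal_real_eq_id, Function.id_comp] at h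
  -- conjugation helpers
  have hconj_mul : ∀ a b : Fin ℓ → ℝ,
      (U * Matrix.diagonal a * star U) * (U * Matrix.diagonal b * star U)
        = U * Matrix.diagonal (fun i => a i * b i) * star U := by
    intro a b
    calc (U * Matrix.diagonal a * star U) * (U * Matrix.diagonal b * star U)
        = U * Matrix.diagonal a * (star U * U) * Matrix.diagonal b * star U := by
          simp only [Matrix.mul_assoc]
      _ = U * Matrix.diagonal (fun i => a i * b i) * star U := by
          rw [hU2, Matrix.mul_one, Matrix.mul_assoc U, Matrix.diagonal_mul_diagonal]
  have hconj_trace : ∀ a : Fin ℓ → ℝ,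
      (U * Matrix.diagonal a * star U).trace = ∑ i, a i := by
    intro a
    rw [Matrix.trace_mul_cycle, hU2, Matrix.one_mul, Matrix.trace_diagonal]
  -- key decomposition of 1 - t • Λ
  have key : ∀ t : ℝ, (1 : Matrix (Fin ℓ) (Fin ℓ) ℝ) - t • (Fᵀ * F)
      = U * Matrix.diagonal (fun i => 1 - t * μ i) * star U := by
    intro t
    have h1 : (1 : Matrix (Fin ℓ) (Fin ℓ) ℝ) = U * Matrix.diagonal (fun _ => (1:ℝ)) * star U := by
      rw [Matrix.diagonal_one, Matrix.mul_one, hU1]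
    have hsmul : t • (U * Matrix.diagonal μ * star U)
        = U * Matrix.diagonal (fun i => t * μ i) * star U := by
      have hd : Matrix.diagonal (fun i => t * μ i) = t • Matrix.diagonal μ := by
        rw [← Matrix.diagonal_smul]
        rfl
      rw [hd, ← smul_mul_assoc, ← mul_smul_comm]
    calc (1 : Matrix (Fin ℓ) (Fin ℓ) ℝ) - t • (Fᵀ * F)
        = U * Matrix.diagonal (fun _ => (1:ℝ)) * star U
          - t • (U * Matrix.diagonal μ * star U) := by rw [← h1, ← hspec]
      _ = U * Matrix.diagonal (fun i => 1 - t * μ i) * star U := by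
          rw [hsmul, ← Matrix.sub_mul, ← Matrix.mul_sub, Matrix.diagonal_sub]
  -- determinant formula
  have hdetU : U.det * (star U).det = 1 := by
    have h := congrArg Matrix.det hU1
    rwa [Matrix.det_mul, Matrix.det_one] at h
  have hdet : ∀ t : ℝ, ((1 : Matrix (Fin ℓ) (Fin ℓ) ℝ) - t • (Fᵀ * F)).det
      = ∏ i, (1 - t * μ i) := by
    intro t
    rw [key t, Matrix.det_mul, Matrix.det_mul, Matrix.det_diagonal]
    calc U.det * (∏ i, (1 - t * μ i)) * (star U).det
        = (∏ i, (1 - t * μ i)) * (U.det * (star U).det) := by ring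
      _ = ∏ i, (1 - t * μ i) := by rw [hdetU, mul_one]
  -- positivity of denominators
  have hσ2 : (0:ℝ) < sigmaMax F ^ 2 := by positivity
  have hq2 : q * sigmaMax F ^ 2 < 1 := by
    have := mul_lt_mul_of_pos_right hqσ hσ2
    rwa [inv_mul_cancel₀ hσ2.ne'] at this
  have hμσ : ∀ i, μ i ≤ sigmaMax F ^ 2 := by
    intro i
    set v : Fin ℓ → ℝ := ⇑(hΛ.eigenvectorBasis i) with hvdef
    have hv1 : ∑ j, (v j)^2 = 1 := by
      have h := hΛ.eigenvectorBasis.orthonormal.1 i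
      rw [EuclideanSpace.norm_eq] at h
      have h2 := congrArg (· ^ 2) h
      simp only [one_pow] at h2
      rw [Real.sq_sqrt (Finset.sum_nonneg fun _ _ => sq_nonneg _)] at h2
      simpa [sq_abs] using h2
    have hev : (Fᵀ * F) *ᵥ v = μ i • v := hΛ.mulVec_eigenvectorBasis i
    have hquad : ∑ j, (F.mulVec v j)^2 = μ i := by
      have h1 : ∑ j, (F.mulVec v j)^2 = (F *ᵥ v) ⬝ᵥ (F *ᵥ v) := by
        simp [dotProduct, sq]
      have h2 : (F *ᵥ v) ⬝ᵥ (F *ᵥ v) = v ⬝ᵥ ((Fᵀ * F) *ᵥ v) := by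
        rw [← Matrix.mulVec_mulVec, Matrix.dotProduct_mulVec v, Matrix.vecMul_transpose]
      have h3 : v ⬝ᵥ (μ i • v) = μ i := by
        rw [dotProduct_smul]
        have : v ⬝ᵥ v = ∑ j, (v j)^2 := by simp [dotProduct, sq]
        rw [smul_eq_mul, this, hv1, mul_one]
      rw [h1, h2, hev, h3]
    have hmem : Real.sqrt (μ i) ∈ {x : ℝ | ∃ w : Fin ℓ → ℝ, (∑ i, (w i)^2) = 1 ∧
        x = Real.sqrt (∑ j, (F.mulVec w j)^2)} := ⟨v, hv1, by rw [hquad]⟩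
    have hle : Real.sqrt (μ i) ≤ sigmaMax F := le_csSup (bddAbove_sigmaSet F) hmem
    calc μ i = Real.sqrt (μ i) ^ 2 := (Real.sq_sqrt (hμ0 i)).symm
      _ ≤ sigmaMax F ^ 2 := by
          apply pow_le_pow_left₀ (Real.sqrt_nonneg _) hle
  have hden : ∀ i, 0 < 1 - q * μ i := by
    intro i
    have : q * μ i ≤ q * sigmaMax F ^ 2 := mul_le_mul_of_nonneg_left (hμσ i) hq0
    linarith
  have hγ2 : γ ^ 2 < sigmaMax F ^ 2 := by
    apply pow_lt_pow_left₀ hγσ hγ0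
    norm_num
  have hγden : 0 < 1 - q * γ ^ 2 := by
    have : q * γ ^ 2 ≤ q * sigmaMax F ^ 2 := mul_le_mul_of_nonneg_left hγ2.le hq0
    linarith
  -- the inverse matrix
  have hSq : Sq F q = U * Matrix.diagonal (fun i => (1 - q * μ i)⁻¹) * star U := by
    rw [Sq]
    apply Matrix.inv_eq_right_inv
    rw [key q, hconj_mul]
    have : (fun i => (1 - q * μ i) * (1 - q * μ i)⁻¹) = fun _ => (1:ℝ) := by
      funext i
      exact mul_inv_cancel₀ (hden i).ne'
    rw [this, Matrix.diagonal_one, Matrix.mul_one, hU1]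
  -- traces
  set A : ℝ := ∑ i, μ i * (1 - q * μ i)⁻¹ with hAdef
  set B : ℝ := ∑ i, (1 - q * μ i)⁻¹ with hBdef
  have htrS : (Sq F q).trace = B := by rw [hSq, hconj_trace]
  have htrΛS : (Fᵀ * F * Sq F q).trace = A := by
    rw [hSq, hspec, hconj_mul, hconj_trace]
  have hA0 : 0 ≤ A :=
    Finset.sum_nonneg fun i _ => mul_nonneg (hμ0 i) (inv_nonneg.mpr (hden i).le)
  have hB0 : 0 < B := by
    apply Finset.sum_pos (fun i _ => inv_pos.mpr (hden i))
    exact Finset.univ_nonempty_iff.mpr ⟨⟨0, hℓ⟩⟩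
  have hBA : B - q * A = (ℓ : ℝ) := by
    have : B - q * A = ∑ i, ((1 - q * μ i)⁻¹ - q * (μ i * (1 - q * μ i)⁻¹)) := by
      rw [hAdef, hBdef, Finset.mul_sum, ← Finset.sum_sub_distrib]
    rw [this]
    have heach : ∀ i : Fin ℓ, (1 - q * μ i)⁻¹ - q * (μ i * (1 - q * μ i)⁻¹) = 1 := by
      intro i
      have h : (1 - q * μ i)⁻¹ - q * (μ i * (1 - q * μ i)⁻¹)
          = (1 - q * μ i) * (1 - q * μ i)⁻¹ := by ring
      rw [h, mul_inv_cancel₀ (hden i).ne']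
    rw [Finset.sum_congr rfl fun i _ => heach i]
    simp
  have hN : Nfun F q ^ 2 = A / B := by
    rw [Nfun, htrS, htrΛS, Real.sq_sqrt (div_nonneg hA0 hB0.le)]
  -- the derivative of the smooth representative
  set D : ℝ := (∑ i, (1/2) * (-(μ i) / (1 - q * μ i)))
    - ((ℓ:ℝ)/2) * (-(γ^2) / (1 - q * γ^2)) with hDdef
  have hg : HasDerivAt
      (fun t : ℝ => (∑ i, (1/2) * Real.log (1 - t * μ i))
        - ((ℓ:ℝ)/2) * Real.log (1 - t * γ^2)) D q := by
    apply HasDerivAt.sub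
    · apply HasDerivAt.fun_sum
      intro i _
      have h1 : HasDerivAt (fun t : ℝ => 1 - t * μ i) (-(μ i)) q := by
        simpa using ((hasDerivAt_id q).mul_const (μ i)).const_sub 1
      exact (h1.log (hden i).ne').const_mul (1/2)
    · have h1 : HasDerivAt (fun t : ℝ => 1 - t * γ^2) (-(γ^2)) q := by
        simpa using ((hasDerivAt_id q).mul_const (γ^2)).const_sub 1
      exact (h1.log hγden.ne').const_mul ((ℓ:ℝ)/2)
  -- the functions agree near q
  have hev : (fun t : ℝ => (∑ i, (1/2) * Real.log (1 - t * μ i))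
      - ((ℓ:ℝ)/2) * Real.log (1 - t * γ^2)) =ᶠ[nhds q] (fun t : ℝ => AAfun F t γ) := by
    have hev1 : ∀ᶠ t in nhds q, ∀ i, 0 < 1 - t * μ i := by
      rw [Filter.eventually_all]
      intro i
      exact ((continuous_const.sub (continuous_id.mul continuous_const)).tendsto q).eventually
        (eventually_gt_nhds (hden i))
    filter_upwards [hev1] with t ht
    rw [AAfun, hdet t, Real.log_prod (fun i _ => (ht i).ne'), Finset.mul_sum]
  have hderiv : HasDerivAt (fun t : ℝ => AAfun F t γ) D q := hg.congr_of_eventuallyEq hev.symm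
  -- identify the derivative value
  have hBeq : B = (ℓ : ℝ) + q * A := by linarith
  have hBne : ((ℓ : ℝ) + q * A) ≠ 0 := by rw [← hBeq]; exact hB0.ne'
  have hsum : (∑ i, (1/2) * (-(μ i) / (1 - q * μ i))) = -(1/2) * A := by
    rw [hAdef, Finset.mul_sum]
    apply Finset.sum_congr rfl
    intro i _
    rw [div_eq_mul_inv]
    ring
  have hTD : (ℓ : ℝ) * (γ^2 - Nfun F q ^ 2) /
      (2 * (1 - q * γ^2) * (1 - q * Nfun F q ^ 2)) = D := by
    rw [hN, hDdef, hsum, hBeq]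
    have h1 : 1 - q * γ^2 ≠ 0 := hγden.ne'
    have h2 : (ℓ:ℝ) ≠ 0 := hℓR.ne'
    have h3 : 1 - q * (A / ((ℓ:ℝ) + q * A)) = (ℓ:ℝ) / ((ℓ:ℝ) + q * A) := by
      field_simp; ring
    rw [h3, div_eq_iff (mul_ne_zero (mul_ne_zero two_ne_zero h1) (div_ne_zero h2 hBne))]
    have hu := mul_inv_cancel₀ hBne
    have hv := mul_inv_cancel₀ h1
    simp only [div_eq_mul_inv]
    linear_combination (-(ℓ:ℝ)*γ^2)*hu - ((ℓ:ℝ)^2*γ^2*((ℓ:ℝ)+q*A)⁻¹)*hv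
  rw [hTD]
  exact hderiv
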